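/- If k is even, the odd girth of the enhanced hypercube Q_{n,k} (2 ≤ k ≤ n) equals k + 1. -/

import Mathlib

open SimpleGraph

/-- The `n`-dimensional hypercube: vertices are binary strings of length `n`
(indexed so that bit `i+1` of the paper is index `i`), adjacent iff they
differ in exactly one bit. -/
def hypercube (n : ℕ) : SimpleGraph (Fin n → Bool) where
  Adj u v := ∃! i, u i ≠ v i
  symm := ⟨by
    rintro u v ⟨i, hi, hu⟩
    exact ⟨i, hi.symm, fun j hj => hu j hj.symm⟩⟩
  loopless := ⟨by
    rintro u ⟨i, hi, -⟩
    exact hi rfl⟩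

/-- Skip relation: `u` and `v` differ exactly in the last `k` bits
(indices `0, …, k-1`). -/
def skipRel (n k : ℕ) (u v : Fin n → Bool) : Prop :=
  u ≠ v ∧ ∀ i : Fin n, (i.val < k → u i ≠ v i) ∧ (k ≤ i.val → u i = v i)

/-- The enhanced hypercube `Q_{n,k}`: hypercube edges together with skip edges. -/
def enhanced (n k : ℕ) : SimpleGraph (Fin n → Bool) where
  Adj u v := (hypercube n).Adj u v ∨ skipRel n k u v
  symm := ⟨by
    rintro u v (h | ⟨hne, h⟩)
    · exact Or.inl h.symm
    · exact Or.inr ⟨hne.symm, fun i =>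
        ⟨fun hi => ((h i).1 hi).symm, fun hi => ((h i).2 hi).symm⟩⟩⟩
  loopless := ⟨by
    rintro u (h | ⟨hne, -⟩)
    · exact h.ne rfl
    · exact hne rfl⟩

/-- The folded hypercube `FQ_n`: hypercube edges together with complementary edges. -/
def folded (n : ℕ) : SimpleGraph (Fin n → Bool) where
  Adj u v := (hypercube n).Adj u v ∨ (u ≠ v ∧ ∀ i, u i ≠ v i)
  symm := ⟨by
    rintro u v (h | ⟨hne, h⟩)
    · exact Or.inl h.symm
    · exact Or.inr ⟨hne.symm, fun i => (h i).symm⟩⟩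
  loopless := ⟨by
    rintro u (h | ⟨hne, -⟩)
    · exact h.ne rfl
    · exact hne rfl⟩

/-- The Cartesian product `K₂ × G`: two copies of `G` joined by crossing edges. -/
def K2Prod {V : Type*} (G : SimpleGraph V) : SimpleGraph (Bool × V) :=
  (completeGraph Bool) □ G

/-- The edge `e` lies on a cycle of length `l` in `G`. -/
def EdgeOnCycle {V : Type*} (G : SimpleGraph V) (e : Sym2 V) (l : ℕ) : Prop :=
  ∃ (v : V) (c : G.Walk v v), c.IsCycle ∧ c.length = l ∧ e ∈ c.edges

namespace Stmt16Aux

open SimpleGraph Walk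

/-- The vertex with the first `j` bits set. -/
def vtx (n j : ℕ) : Fin n → Bool := fun i => decide (i.val < j)

lemma vtx_ne {n a b : ℕ} (hab : a < b) (hb : b ≤ n) : vtx n a ≠ vtx n b := by
  intro h
  have := congrFun h ⟨a, lt_of_lt_of_le hab hb⟩
  simp [vtx, hab] at this

lemma vtx_inj {n a b : ℕ} (ha : a ≤ n) (hb : b ≤ n) (h : vtx n a = vtx n b) : a = b := by
  rcases lt_trichotomy a b with hlt | he | hlt
  · exact absurd h (vtx_ne hlt hb)
  · exact he
  · exact absurd h.symm (vtx_ne hlt ha)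

lemma adj_step {n j : ℕ} (hj : j < n) :
    (hypercube n).Adj (vtx n j) (vtx n (j + 1)) := by
  refine ⟨⟨j, hj⟩, ?_, ?_⟩
  · simp [vtx]
  · rintro ⟨i, hi⟩ hdiff
    have : i = j := by
      by_contra hne
      rcases Nat.lt_or_ge i j with h' | h'
      · exact hdiff (by simp [vtx]; omega)
      · exact hdiff (by simp [vtx]; omega)
    exact Fin.ext this

/-- The increasing path `vtx 0 → vtx 1 → ⋯ → vtx j` in the hypercube. -/
def pw (n : ℕ) : (j : ℕ) → j ≤ n → (hypercube n).Walk (vtx n 0) (vtx n j)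
  | 0, _ => Walk.nil
  | j + 1, h => (pw n j (Nat.le_of_succ_le h)).concat (adj_step (Nat.lt_of_succ_le h))

lemma pw_length (n : ℕ) : ∀ (j : ℕ) (h : j ≤ n), (pw n j h).length = j
  | 0, _ => rfl
  | j + 1, h => by
      simp [pw, Walk.length_concat, pw_length n j (Nat.le_of_succ_le h)]

lemma pw_support (n : ℕ) : ∀ (j : ℕ) (h : j ≤ n),
    (pw n j h).support = (List.range (j + 1)).map (vtx n)
  | 0, _ => rfl
  | j + 1, h => by
      simp [pw, Walk.support_concat, pw_support n j (Nat.le_of_succ_le h),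
        List.range_succ (n := j + 1)]

lemma pw_edge_not_mem (n k : ℕ) (h1 : 2 ≤ k) (h2 : k ≤ n) :
    ∀ (j : ℕ) (h : j ≤ n), s(vtx n 0, vtx n k) ∉ (pw n j h).edges
  | 0, _ => by simp [pw]
  | j + 1, h => by
      simp only [pw, Walk.edges_concat, List.concat_eq_append, List.mem_append,
        List.mem_singleton]
      rintro (hmem | heq)
      · exact pw_edge_not_mem n k h1 h2 j (Nat.le_of_succ_le h) hmem
      · rw [Sym2.eq_iff] at heq
        rcases heq with ⟨e1, e2⟩ | ⟨e1, e2⟩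
        · have hj0 : 0 = j := vtx_inj (by omega) (Nat.le_of_succ_le h) e1
          have hk : k = j + 1 := vtx_inj h2 h e2
          omega
        · have : (0 : ℕ) = j + 1 := vtx_inj (by omega) h e1
          omega

lemma pw_isPath (n j : ℕ) (h : j ≤ n) : (pw n j h).IsPath := by
  rw [Walk.isPath_def, pw_support]
  refine List.Nodup.map_on ?_ List.nodup_range
  intro a ha b hb hab
  rw [List.mem_range] at ha hb
  exact vtx_inj (by omega) (by omega) hab

section Part2

variable {n k : ℕ}

/-- Whether a dart differs at coordinate `i`. -/
def diffB (i : Fin n) (d : (enhanced n k).Dart) : Bool := d.toProd.1 i != d.toProd.2 i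

/-- Whether a dart is a skip dart (differs at coordinates 0 and 1). -/
def skipB (h0 : 0 < n) (h1 : 1 < n) (d : (enhanced n k).Dart) : Bool :=
  diffB ⟨0, h0⟩ d && diffB ⟨1, h1⟩ d

lemma diffB_iff (i : Fin n) (d : (enhanced n k).Dart) :
    diffB i d = true ↔ d.toProd.1 i ≠ d.toProd.2 i := by
  simp [diffB]

lemma dart_class (h1 : 2 ≤ k) (h2 : k ≤ n) (h0 : 0 < n) (hn1 : 1 < n)
    (d : (enhanced n k).Dart) :
    (skipB h0 hn1 d = true ∧ ∀ i : Fin n, (diffB i d = true ↔ i.val < k)) ∨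
    (skipB h0 hn1 d = false ∧ ∃! i : Fin n, diffB i d = true) := by
  rcases d.adj with ⟨i, hi, hu⟩ | ⟨hne, hprop⟩
  · right
    constructor
    · by_contra hs
      rw [Bool.not_eq_false, skipB, Bool.and_eq_true, diffB_iff, diffB_iff] at hs
      have e0 : (⟨0, h0⟩ : Fin n) = i := hu _ hs.1
      have e1 : (⟨1, hn1⟩ : Fin n) = i := hu _ hs.2
      rw [← e0] at e1
      have := congrArg Fin.val e1
      simp at this
    · exact ⟨i, (diffB_iff i d).mpr hi, fun j hj => hu j ((diffB_iff j d).mp hj)⟩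
  · left
    have hall : ∀ i : Fin n, (diffB i d = true ↔ i.val < k) := by
      intro i
      rw [diffB_iff]
      constructor
      · intro hd
        by_contra hik
        exact hd ((hprop i).2 (by omega))
      · intro hik
        exact (hprop i).1 hik
    refine ⟨?_, hall⟩
    rw [skipB, Bool.and_eq_true]
    exact ⟨(hall _).mpr (by simpa using by omega), (hall _).mpr (by simpa using by omega)⟩

lemma parity_lemma (h0 : 0 < n) {u v : Fin n → Bool} (p : (enhanced n k).Walk u v)
    (i : Fin n) : Even (p.darts.countP (diffB i)) ↔ u i = v i := by
  induction p with
  | nil => simp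
  | cons h q ih =>
    rename_i a b c
    rw [Walk.darts_cons, List.countP_cons]
    by_cases hd : diffB i (⟨(a, b), h⟩ : (enhanced n k).Dart) = true
    · have hab : a i ≠ b i := (diffB_iff i _).mp hd
      simp only [hd, if_pos, Nat.even_add_one, ih]
      cases hval : a i <;> cases hval2 : b i <;> cases hval3 : c i <;> simp_all
    · have hab : a i = b i := by
        by_contra hne
        exact hd ((diffB_iff i _).mpr hne)
      simp only [Bool.not_eq_true] at hd
      simp [hd, ih, hab]

lemma length_split (h1 : 2 ≤ k) (h2 : k ≤ n) (h0 : 0 < n) (hn1 : 1 < n) :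
    ∀ l : List ((enhanced n k).Dart),
      l.length = l.countP (skipB h0 hn1) +
        ∑ i : Fin n, l.countP (fun d => !skipB h0 hn1 d && diffB i d) := by
  intro l
  induction l with
  | nil => simp
  | cons d t ih =>
    rcases dart_class h1 h2 h0 hn1 d with ⟨hs, _⟩ | ⟨hs, i', hi', hu⟩
    · have hz : ∀ i : Fin n, (!skipB h0 hn1 d && diffB i d) = false := by
        intro i; simp [hs]
      have hskip : (d :: t).countP (skipB h0 hn1) = t.countP (skipB h0 hn1) + 1 :=
        List.countP_cons_of_pos (by simp [hs])
      have hrest : ∀ i : Fin n,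
          (d :: t).countP (fun d => !skipB h0 hn1 d && diffB i d) =
            t.countP (fun d => !skipB h0 hn1 d && diffB i d) := by
        intro i; exact List.countP_cons_of_neg (by simp [hz i])
      rw [List.length_cons, hskip]
      simp only [hrest]
      omega
    · have hz : ∀ i : Fin n,
          (!skipB h0 hn1 d && diffB i d) = true ↔ i = i' := by
        intro i
        simp only [hs, Bool.not_false, Bool.true_and]
        constructor
        · exact fun hd => hu i hd
        · rintro rfl; exact hi'
      have hcount : ∀ i : Fin n,
          (d :: t).countP (fun d => !skipB h0 hn1 d && diffB i d) =
            t.countP (fun d => !skipB h0 hn1 d && diffB i d) +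
              (if i = i' then 1 else 0) := by
        intro i
        by_cases hii : i = i'
        · rw [List.countP_cons_of_pos (by simp [(hz i).mpr hii]), if_pos hii]
        · have hzf : (!skipB h0 hn1 d && diffB i d) = false := by
            rw [Bool.eq_false_iff]
            intro hc
            exact hii ((hz i).mp hc)
          rw [List.countP_cons_of_neg (by simp [hzf]), if_neg hii, add_zero]
      have hskip : (d :: t).countP (skipB h0 hn1) = t.countP (skipB h0 hn1) :=
        List.countP_cons_of_neg (by simp [hs])
      rw [List.length_cons, hskip]
      simp only [hcount]
      rw [Finset.sum_add_distrib, Finset.sum_ite_eq' Finset.univ i' (fun _ => 1)]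
      simp only [Finset.mem_univ, if_pos]
      omega

lemma countP_lt (h1 : 2 ≤ k) (h2 : k ≤ n) (h0 : 0 < n) (hn1 : 1 < n)
    (i : Fin n) (hik : i.val < k) :
    ∀ l : List ((enhanced n k).Dart),
      l.countP (diffB i) = l.countP (skipB h0 hn1) +
        l.countP (fun d => !skipB h0 hn1 d && diffB i d) := by
  intro l
  induction l with
  | nil => simp
  | cons d t ih =>
    rcases dart_class h1 h2 h0 hn1 d with ⟨hs, hall⟩ | ⟨hs, i', hi', hu⟩
    · have hdt : diffB i d = true := (hall i).mpr hik
      rw [List.countP_cons_of_pos (by simp [hdt]),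
        List.countP_cons_of_pos (by simp [hs]),
        List.countP_cons_of_neg (by simp [hs]), ih]
      omega
    · by_cases hd : diffB i d = true
      · rw [List.countP_cons_of_pos (by simp [hd]),
          List.countP_cons_of_neg (by simp [hs]),
          List.countP_cons_of_pos (by simp [hs, hd]), ih]
        omega
      · simp only [Bool.not_eq_true] at hd
        rw [List.countP_cons_of_neg (by simp [hd]),
          List.countP_cons_of_neg (by simp [hs]),
          List.countP_cons_of_neg (by simp [hd]), ih]

lemma countP_ge (h1 : 2 ≤ k) (h2 : k ≤ n) (h0 : 0 < n) (hn1 : 1 < n)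
    (i : Fin n) (hik : k ≤ i.val) :
    ∀ l : List ((enhanced n k).Dart),
      l.countP (diffB i) = l.countP (fun d => !skipB h0 hn1 d && diffB i d) := by
  intro l
  induction l with
  | nil => simp
  | cons d t ih =>
    rcases dart_class h1 h2 h0 hn1 d with ⟨hs, hall⟩ | ⟨hs, i', hi', hu⟩
    · have hdf : diffB i d = false := by
        rw [Bool.eq_false_iff]
        intro hc
        have := (hall i).mp hc
        omega
      rw [List.countP_cons_of_neg (by simp [hdf]),
        List.countP_cons_of_neg (by simp [hdf]), ih]
    · by_cases hd : diffB i d = true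
      · rw [List.countP_cons_of_pos (by simp [hd]),
          List.countP_cons_of_pos (by simp [hs, hd]), ih]
      · simp only [Bool.not_eq_true] at hd
        rw [List.countP_cons_of_neg (by simp [hd]),
          List.countP_cons_of_neg (by simp [hd]), ih]

lemma card_filter_lt (h2 : k ≤ n) :
    (Finset.univ.filter (fun i : Fin n => i.val < k)).card = k := by
  have heq : Finset.univ.filter (fun i : Fin n => i.val < k) =
      Finset.univ.map (Fin.castLEEmb h2) := by
    ext i
    rw [Finset.mem_filter, Finset.mem_map]
    constructor
    · rintro ⟨-, hi⟩
      exact ⟨⟨i.val, hi⟩, Finset.mem_univ _, Fin.ext rfl⟩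
    · rintro ⟨j, -, rfl⟩
      exact ⟨Finset.mem_univ _, j.isLt⟩
  rw [heq, Finset.card_map, Finset.card_univ, Fintype.card_fin]

end Part2

end Stmt16Aux

open Stmt16Aux

/-- If `k` is even, the odd girth of `Q_{n,k}` (`2 ≤ k ≤ n`) equals `k + 1`. -/
theorem stmt16 (n k : ℕ) (hk : Even k) (h1 : 2 ≤ k) (h2 : k ≤ n) :
    (∃ (v : Fin n → Bool) (c : (enhanced n k).Walk v v),
      c.IsCycle ∧ c.length = k + 1) ∧
    (∀ (v : Fin n → Bool) (c : (enhanced n k).Walk v v), c.IsCycle → Odd c.length →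
      k + 1 ≤ c.length) := by
  have h0 : 0 < n := by omega
  have hn1 : 1 < n := by omega
  constructor
  · -- existence of a (k+1)-cycle
    have hle : hypercube n ≤ enhanced n k := fun u v h => Or.inl h
    have hpath : ((pw n k h2).mapLe hle).IsPath :=
      SimpleGraph.Walk.IsPath.mapLe hle (pw_isPath n k h2)
    have hadj : (enhanced n k).Adj (vtx n 0) (vtx n k) := by
      refine Or.inr ⟨vtx_ne (by omega) h2, ?_⟩
      intro i
      constructor
      · intro hik h
        have : vtx n 0 i = false := by simp [vtx]
        have h2' : vtx n k i = true := by simp [vtx, hik]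
        rw [this, h2'] at h
        exact Bool.false_ne_true h
      · intro hik
        have : vtx n 0 i = false := by simp [vtx]
        have h2' : vtx n k i = false := by simp [vtx]; omega
        rw [this, h2']
    have hp : (((pw n k h2).mapLe hle).reverse).IsPath := hpath.reverse
    have hedge : s(vtx n 0, vtx n k) ∉ (((pw n k h2).mapLe hle).reverse).edges := by
      intro hmem
      rw [SimpleGraph.Walk.edges_reverse, List.mem_reverse] at hmem
      have hmem2 : s(vtx n 0, vtx n k) ∈ (pw n k h2).edges := by
        simpa [SimpleGraph.Walk.edges_map, Sym2.map_id] using hmem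
      exact pw_edge_not_mem n k h1 h2 k h2 hmem2
    refine ⟨vtx n 0, SimpleGraph.Walk.cons hadj (((pw n k h2).mapLe hle).reverse), ?_, ?_⟩
    · exact SimpleGraph.Path.cons_isCycle ⟨_, hp⟩ hadj hedge
    · simp [SimpleGraph.Walk.length_reverse, SimpleGraph.Walk.length_map,
        pw_length n k h2]
  · -- lower bound
    intro v c _hc hodd
    set l := c.darts with hl
    have hlen : c.length = l.countP (skipB h0 hn1) +
        ∑ i : Fin n, l.countP (fun d => !skipB h0 hn1 d && diffB i d) := by
      rw [← SimpleGraph.Walk.length_darts]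
      exact length_split h1 h2 h0 hn1 l
    have hN : ∀ i : Fin n, Even (l.countP (diffB i)) :=
      fun i => (parity_lemma h0 c i).mpr rfl
    have hSodd : Odd (l.countP (skipB h0 hn1)) := by
      by_contra hS
      rw [Nat.not_odd_iff_even] at hS
      have hH : ∀ i : Fin n,
          Even (l.countP (fun d => !skipB h0 hn1 d && diffB i d)) := by
        intro i
        by_cases hik : i.val < k
        · have hNi := hN i
          rw [countP_lt h1 h2 h0 hn1 i hik l] at hNi
          exact (Nat.even_add.mp hNi).mp hS
        · have hNi := hN i
          rwa [countP_ge h1 h2 h0 hn1 i (by omega) l] at hNi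
      have heven : Even c.length := by
        rw [hlen]
        exact hS.add (Finset.even_sum _ (fun i _ => hH i))
      exact (Nat.not_even_iff_odd.mpr hodd) heven
    have hS1 : 1 ≤ l.countP (skipB h0 hn1) := hSodd.pos
    have hHpos : ∀ i : Fin n, i.val < k →
        1 ≤ l.countP (fun d => !skipB h0 hn1 d && diffB i d) := by
      intro i hik
      have hNi := hN i
      rw [countP_lt h1 h2 h0 hn1 i hik l] at hNi
      obtain ⟨a, ha⟩ := hNi
      obtain ⟨b, hb⟩ := hSodd
      omega
    have hsum : k ≤ ∑ i : Fin n,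
        l.countP (fun d => !skipB h0 hn1 d && diffB i d) := by
      calc k = (Finset.univ.filter (fun i : Fin n => i.val < k)).card :=
            (card_filter_lt h2).symm
        _ = ∑ _i ∈ Finset.univ.filter (fun i : Fin n => i.val < k), 1 := by
            rw [Finset.card_eq_sum_ones]
        _ ≤ ∑ i ∈ Finset.univ.filter (fun i : Fin n => i.val < k),
              l.countP (fun d => !skipB h0 hn1 d && diffB i d) :=
            Finset.sum_le_sum (fun i hi => hHpos i (Finset.mem_filter.mp hi).2)
        _ ≤ ∑ i : Fin n, l.countP (fun d => !skipB h0 hn1 d && diffB i d) :=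
            Finset.sum_le_sum_of_subset (Finset.filter_subset _ _)
    omega
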